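/- Let 0 < P₂ < P₁ < 1, let ε ∈ (0,1), let γ ∈ (0,2), set z = √( ln(2/γ) / ln(1/ε) ), and let β be a positive integer with β ≥ ln(1/ε)·(1+z)² / (2·(P₁ − P₂)²). Set μ = ((z·P₁ + P₂)/(1+z))·β. If X₁,…,X_β are independent identically distributed {0,1}-valued random variables with Pr[X_i = 1] = p₂ for some p₂ ≤ P₂, then Pr[ ∑_{i=1}^β X_i ≥ μ ] ≤ γ/2. -/

import Mathlib

open MeasureTheory ProbabilityTheory

open Real

/-- Hoeffding's lemma for Bernoulli: for `p ∈ [0,1]` and `t ≥ 0`,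
`1 - p + p e^t ≤ exp (p t + t²/8)`. -/
lemma bernoulli_mgf_le {p t : ℝ} (hp0 : 0 ≤ p) (hp1 : p ≤ 1) (ht : 0 ≤ t) :
    1 - p + p * exp t ≤ exp (p * t + t ^ 2 / 8) := by
  set u : ℝ → ℝ := fun s => 1 - p + p * exp s with hu_def
  have hu_pos : ∀ s ∈ Set.Ici (0 : ℝ), 0 < u s := by
    intro s hs
    have h1 : (1 : ℝ) ≤ exp s := one_le_exp hs
    have : p * 1 ≤ p * exp s := by gcongr
    simp only [hu_def]; nlinarith
  set q : ℝ → ℝ := fun s => p * exp s / u s with hq_def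
  have hq_mem : ∀ s ∈ Set.Ici (0 : ℝ), 0 ≤ q s ∧ q s ≤ 1 := by
    intro s hs
    have hu := hu_pos s hs
    constructor
    · exact div_nonneg (by positivity) hu.le
    · rw [div_le_one hu]
      have := exp_pos s
      simp only [hu_def]; nlinarith
  have hu_deriv : ∀ s : ℝ, HasDerivAt u (p * exp s) s := by
    intro s
    exact ((Real.hasDerivAt_exp s).const_mul p).const_add (1 - p)
  have hq_deriv : ∀ s ∈ Set.Ici (0 : ℝ), HasDerivAt q (q s * (1 - q s)) s := by
    intro s hs
    have hu := hu_pos s hs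
    have h := ((Real.hasDerivAt_exp s).const_mul p).div (hu_deriv s) hu.ne'
    refine h.congr_deriv ?_
    simp only [hq_def]
    field_simp
  -- MVT : |q s - p| ≤ s/4 on [0, ∞)
  have hq0 : q 0 = p := by simp [hq_def, hu_def]
  have hmvt : ∀ s ∈ Set.Ici (0 : ℝ), |q s - p| ≤ s / 4 := by
    intro s hs
    have h := Convex.norm_image_sub_le_of_norm_hasDerivWithin_le
      (f := q) (f' := fun s => q s * (1 - q s)) (C := 1/4) (s := Set.Ici (0:ℝ))
      (fun x hx => (hq_deriv x hx).hasDerivWithinAt)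
      (fun x hx => by
        obtain ⟨h0, h1⟩ := hq_mem x hx
        simp only [Real.norm_eq_abs, abs_le]
        constructor <;> nlinarith [sq_nonneg (q x - 1/2), mul_nonneg h0 (by linarith : (0:ℝ) ≤ 1 - q x)])
      (convex_Ici 0) (Set.self_mem_Ici) hs
    rw [hq0, Real.norm_eq_abs, Real.norm_eq_abs] at h
    calc |q s - p| ≤ 1/4 * |s - 0| := h
      _ = s / 4 := by rw [sub_zero, abs_of_nonneg hs]; ring
  -- FTC
  set h : ℝ → ℝ := fun s => Real.log (u s) - p * s with hh_def
  have hh_deriv : ∀ s ∈ Set.uIcc (0:ℝ) t, HasDerivAt h (q s - p) s := by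
    intro s hs
    rw [Set.uIcc_of_le ht] at hs
    have hu := hu_pos s (Set.mem_Ici.mpr hs.1)
    have h1 := (hu_deriv s).log hu.ne'
    simpa [hh_def, hq_def, Pi.sub_def] using h1.sub ((hasDerivAt_id s).const_mul p)
  have hq_cont : ContinuousOn (fun s => q s - p) (Set.uIcc (0:ℝ) t) := by
    rw [Set.uIcc_of_le ht]
    have : ContinuousOn u (Set.Icc 0 t) := (continuous_const.add (continuous_const.mul continuous_exp)).continuousOn
    exact ((continuous_const.mul continuous_exp).continuousOn.div this
      (fun x hx => (hu_pos x (Set.mem_Ici.mpr hx.1)).ne')).sub continuousOn_const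
  have hint : IntervalIntegrable (fun s => q s - p) MeasureTheory.volume 0 t :=
    hq_cont.intervalIntegrable
  have hftc : ∫ s in (0:ℝ)..t, (q s - p) = h t - h 0 :=
    intervalIntegral.integral_eq_sub_of_hasDerivAt hh_deriv hint
  have hh0 : h 0 = 0 := by simp [hh_def, hu_def]
  have hbound : ∫ s in (0:ℝ)..t, (q s - p) ≤ t ^ 2 / 8 := by
    have hmono : ∫ s in (0:ℝ)..t, (q s - p) ≤ ∫ s in (0:ℝ)..t, s / 4 := by
      apply intervalIntegral.integral_mono_on ht hint
      · exact (continuous_id.div_const 4).intervalIntegrable 0 t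
      · intro s hs
        exact le_trans (le_abs_self _) (hmvt s (Set.mem_Ici.mpr hs.1))
    have : ∫ s in (0:ℝ)..t, s / 4 = t ^ 2 / 8 := by
      simp_rw [div_eq_mul_inv]
      rw [intervalIntegral.integral_mul_const, integral_id]
      ring
    linarith
  have hlog : Real.log (u t) ≤ p * t + t ^ 2 / 8 := by
    have : h t ≤ t ^ 2 / 8 := by rw [hftc, hh0] at hbound; linarith
    simp only [hh_def] at this
    linarith
  calc u t = exp (Real.log (u t)) := (exp_log (hu_pos t ht)).symm
    _ ≤ exp (p * t + t ^ 2 / 8) := exp_le_exp.mpr hlog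

section Main
variable {Ω : Type*} [MeasurableSpace Ω] (μ : Measure Ω) [IsProbabilityMeasure μ]

lemma indicator_eq (Y : Ω → ℝ) (hY : ∀ ω, Y ω = 0 ∨ Y ω = 1) :
    Y = Set.indicator {ω | Y ω = 1} (fun _ => (1:ℝ)) := by
  funext ω
  rcases hY ω with h | h <;> by_cases hm : Y ω = 1 <;>
    simp_all [Set.indicator_apply, Set.mem_setOf_eq]

lemma mgf_bernoulli (Y : Ω → ℝ) (hYm : Measurable Y) (hY : ∀ ω, Y ω = 0 ∨ Y ω = 1)
    (t : ℝ) :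
    mgf Y μ t = 1 - (μ {ω | Y ω = 1}).toReal + (μ {ω | Y ω = 1}).toReal * exp t := by
  have hA : MeasurableSet {ω | Y ω = 1} := hYm (measurableSet_singleton 1)
  have hYint : Integrable Y μ := by
    rw [indicator_eq Y hY]
    exact (integrable_const (1:ℝ)).indicator hA
  have hIY : ∫ ω, Y ω ∂μ = (μ {ω | Y ω = 1}).toReal := by
    conv_lhs => rw [indicator_eq Y hY]
    rw [integral_indicator_const (1:ℝ) hA]
    simp [Measure.real]
  have hpt : ∀ ω, exp (t * Y ω) = 1 + (exp t - 1) * Y ω := by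
    intro ω
    rcases hY ω with h | h <;> simp [h]
  rw [mgf]
  simp_rw [hpt]
  rw [integral_add (integrable_const 1) (hYint.const_mul _), MeasureTheory.integral_const_mul, hIY]
  simp
  ring
end Main


set_option maxHeartbeats 1600000 in
/-- The per-point false-positive bound underlying the paper's guarantee
`Pr[𝒫₂' holds] > 1/2` (via Hoeffding's inequality): with
`z = √(ln(2/γ)/ln(1/ε))`, `β ≥ ln(1/ε)·(1+z)²/(2(P₁ − P₂)²)` hash tables and collision
threshold `μ = ((z·P₁ + P₂)/(1+z))·β`, a point whose per-table collision probability is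
`p₂ ≤ P₂` collects at least `μ` collisions with probability at most `γ/2`. -/
theorem far_point_is_frequent_prob_le
    (P₁ P₂ ε γ z : ℝ) (hP₂ : 0 < P₂) (hP₁₂ : P₂ < P₁) (hP₁ : P₁ < 1)
    (hε : ε ∈ Set.Ioo (0 : ℝ) 1) (hγ : γ ∈ Set.Ioo (0 : ℝ) 2)
    (hz : z = Real.sqrt (Real.log (2 / γ) / Real.log (1 / ε)))
    (β : ℕ) (hβpos : 0 < β)
    (hβ : Real.log (1 / ε) * (1 + z) ^ 2 / (2 * (P₁ - P₂) ^ 2) ≤ (β : ℝ))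
    (Ω : Type*) [MeasurableSpace Ω] (μ : Measure Ω) [IsProbabilityMeasure μ]
    (X : Fin β → Ω → ℝ) (hXmeas : ∀ i, Measurable (X i))
    (hX01 : ∀ i ω, X i ω = 0 ∨ X i ω = 1)
    (hindep : iIndepFun X μ)
    (p₂ : ℝ) (hp₂ : p₂ ≤ P₂)
    (hdist : ∀ i, μ {ω | X i ω = 1} = ENNReal.ofReal p₂) :
    μ {ω | ((z * P₁ + P₂) / (1 + z)) * (β : ℝ) ≤ ∑ i, X i ω} ≤ ENNReal.ofReal (γ / 2) := by
  classical
  obtain ⟨hε0, hε1⟩ := hε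
  obtain ⟨hγ0, hγ2⟩ := hγ
  set L₁ := Real.log (1 / ε) with hL₁
  set L₂ := Real.log (2 / γ) with hL₂
  have hL₁0 : 0 < L₁ := Real.log_pos ((one_lt_one_div hε0 hε1))
  have hL₂0 : 0 < L₂ := Real.log_pos ((one_lt_div hγ0).mpr hγ2)
  have hz0 : 0 ≤ z := hz ▸ Real.sqrt_nonneg _
  have h1z : 0 < 1 + z := by linarith
  have hz2 : z ^ 2 * L₁ = L₂ := by
    rw [hz, sq_sqrt (div_nonneg hL₂0.le hL₁0.le)]
    field_simp
  set c : ℝ := (z * P₁ + P₂) / (1 + z) with hc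
  set p' : ℝ := (ENNReal.ofReal p₂).toReal with hp'
  have hp'0 : 0 ≤ p' := ENNReal.toReal_nonneg
  have hp'P : p' ≤ P₂ := by
    have := ENNReal.toReal_mono (by simp) (ENNReal.ofReal_le_ofReal hp₂)
    rwa [ENNReal.toReal_ofReal hP₂.le] at this
  have hp'1 : p' ≤ 1 := by linarith
  have hP₂c : P₂ ≤ c := by
    rw [hc, le_div_iff₀ h1z]
    nlinarith
  set t : ℝ := 4 * (c - p') with htdef
  have ht0 : 0 ≤ t := by nlinarith
  -- the sum as a function
  set S : Ω → ℝ := ∑ i, X i with hS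
  have hSapp : ∀ ω, S ω = ∑ i, X i ω := by
    intro ω; simp [hS]
  have hSmeas : Measurable S := by
    have : S = fun ω => ∑ i, X i ω := funext hSapp
    rw [this]; exact Finset.measurable_sum _ (fun i _ => hXmeas i)
  have hSle : ∀ ω, S ω ≤ (β : ℝ) := by
    intro ω
    rw [hSapp]
    calc ∑ i, X i ω ≤ ∑ _i : Fin β, (1 : ℝ) := by
          apply Finset.sum_le_sum
          intro i _
          rcases hX01 i ω with h | h <;> simp [h]
      _ = (β : ℝ) := by simp
  have hint_i : ∀ i, Integrable (fun ω => exp (t * X i ω)) μ := by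
    intro i
    refine Integrable.mono' (integrable_const (exp t)) ?_ ?_
    · exact (((hXmeas i).const_mul t).exp).aestronglyMeasurable
    · refine Filter.Eventually.of_forall fun ω => ?_
      rw [Real.norm_eq_abs, abs_of_pos (exp_pos _), exp_le_exp]
      rcases hX01 i ω with h | h <;> simp [h, ht0]
  have hintS : Integrable (fun ω => exp (t * S ω)) μ := by
    refine Integrable.mono' (integrable_const (exp (t * β))) ?_ ?_
    · exact ((hSmeas.const_mul t).exp).aestronglyMeasurable
    · refine Filter.Eventually.of_forall fun ω => ?_
      rw [Real.norm_eq_abs, abs_of_pos (exp_pos _), exp_le_exp]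
      exact mul_le_mul_of_nonneg_left (hSle ω) ht0
  -- Chernoff bound
  have hchernoff := measure_ge_le_exp_mul_mgf (X := S) (μ := μ) (t := t) (c * β) ht0 hintS
  -- mgf of the sum
  have hmgf_i : ∀ i, mgf (X i) μ t = 1 - p' + p' * exp t := by
    intro i
    rw [mgf_bernoulli μ (X i) (hXmeas i) (hX01 i) t, hdist i]
  have hmgfS : mgf S μ t = (1 - p' + p' * exp t) ^ β := by
    rw [hS, hindep.mgf_sum hXmeas]
    simp [hmgf_i]
  -- base positivity
  have hbase0 : 0 ≤ 1 - p' + p' * exp t := by nlinarith [exp_pos t]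
  have hpow : (1 - p' + p' * exp t) ^ β ≤ exp (p' * t + t ^ 2 / 8) ^ β :=
    pow_le_pow_left₀ hbase0 (bernoulli_mgf_le hp'0 hp'1 ht0) β
  have hexp_pow : exp (p' * t + t ^ 2 / 8) ^ β = exp ((β : ℝ) * (p' * t + t ^ 2 / 8)) :=
    (Real.exp_nat_mul _ β).symm
  -- exponent computation
  have hexponent : -t * (c * β) + (β : ℝ) * (p' * t + t ^ 2 / 8) = -2 * (c - p') ^ 2 * β := by
    rw [htdef]; ring
  -- exponent bound
  have hkey : L₂ ≤ 2 * (c - p') ^ 2 * β := by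
    have hδ : c - P₂ = z * (P₁ - P₂) / (1 + z) := by
      rw [hc]; field_simp; ring
    have hδ0 : 0 ≤ z * (P₁ - P₂) / (1 + z) :=
      div_nonneg (mul_nonneg hz0 (by linarith)) h1z.le
    have hΔ : z * (P₁ - P₂) / (1 + z) ≤ c - p' := by rw [← hδ]; linarith
    have hsq : (z * (P₁ - P₂) / (1 + z)) ^ 2 ≤ (c - p') ^ 2 :=
      pow_le_pow_left₀ hδ0 hΔ 2
    have hB : L₂ = 2 * (z * (P₁ - P₂) / (1 + z)) ^ 2 * (L₁ * (1 + z) ^ 2 / (2 * (P₁ - P₂) ^ 2)) := by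
      rw [div_pow]
      have h2 : (P₁ - P₂) ^ 2 ≠ 0 := pow_ne_zero 2 (by linarith)
      field_simp
      rw [← hz2]
      linear_combination (-(z ^ 2 * L₁)) * mul_inv_cancel₀ (sub_ne_zero.mpr hP₁₂.ne')
    have hB0 : 0 ≤ L₁ * (1 + z) ^ 2 / (2 * (P₁ - P₂) ^ 2) :=
      div_nonneg (mul_nonneg hL₁0.le (sq_nonneg _)) (by positivity)
    calc L₂ = 2 * (z * (P₁ - P₂) / (1 + z)) ^ 2 * (L₁ * (1 + z) ^ 2 / (2 * (P₁ - P₂) ^ 2)) := hB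
      _ ≤ 2 * (z * (P₁ - P₂) / (1 + z)) ^ 2 * β := by
          exact mul_le_mul_of_nonneg_left hβ (by nlinarith [sq_nonneg (z * (P₁ - P₂) / (1 + z))])
      _ ≤ 2 * (c - p') ^ 2 * β := by
          apply mul_le_mul_of_nonneg_right (by nlinarith) (Nat.cast_nonneg β)
  -- assemble the real-valued bound
  have hreal : exp (-t * (c * β)) * mgf S μ t ≤ γ / 2 := by
    rw [hmgfS]
    calc exp (-t * (c * β)) * (1 - p' + p' * exp t) ^ β
        ≤ exp (-t * (c * β)) * exp ((β : ℝ) * (p' * t + t ^ 2 / 8)) := by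
          rw [← hexp_pow]
          exact mul_le_mul_of_nonneg_left hpow (exp_pos _).le
      _ = exp (-2 * (c - p') ^ 2 * β) := by rw [← Real.exp_add, hexponent]
      _ ≤ exp (-L₂) := by rw [exp_le_exp]; linarith
      _ = γ / 2 := by
          rw [hL₂, ← Real.log_inv, inv_div, Real.exp_log (by linarith)]
  -- convert to ENNReal
  have hfin : μ {ω | c * β ≤ ∑ i, X i ω} ≠ ⊤ := measure_ne_top μ _
  have hset : {ω | c * β ≤ ∑ i, X i ω} = {ω | c * β ≤ S ω} := by
    ext ω; simp [hSapp]
  rw [hset]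
  calc μ {ω | c * β ≤ S ω} = ENNReal.ofReal (μ {ω | c * β ≤ S ω}).toReal :=
        (ENNReal.ofReal_toReal (measure_ne_top μ _)).symm
    _ ≤ ENNReal.ofReal (γ / 2) := ENNReal.ofReal_le_ofReal (le_trans hchernoff hreal)
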